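/- In the two-patch tangential edge setting, there exists a linear operator P¹_e : V¹_pw → V¹_pw such that for every u ∈ V¹_pw: (1) P¹_e u is tangentially continuous, i.e. (P¹_e u)⁻(x,0) = (P¹_e u)⁺(x,0) for all x ∈ [0,1]; (2) P¹_e u = u if and only if u is tangentially continuous; and (3) P¹_e preserves patchwise polynomial moments of order r, i.e. for each σ ∈ {−,+} and all q₁, q₂ ∈ Q one has ∫_{[0,1]²} (P¹_e u)^σ(x,s) q₁(x) q₂(s) dx ds = ∫_{[0,1]²} u^σ(x,s) q₁(x) q₂(s) dx ds. -/

import Mathlib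

noncomputable section

/-- The `L²(0,1)` pairing `⟨f, g⟩ = ∫₀¹ f g`. -/
def l2ip (f g : ℝ → ℝ) : ℝ := ∫ x in (0:ℝ)..1, f x * g x

/-- Real polynomial functions of degree at most `r - 1`. -/
def polyDegLT (r : ℕ) : Set (ℝ → ℝ) :=
  {f | ∃ p : Polynomial ℝ, p.degree < (r : WithBot ℕ) ∧ f = fun x => p.eval x}

/-- Span of the tensor products `(x, s) ↦ w(x) λⱼ(s)` with `w` in the edge-parallel
space `W` and `λⱼ` the edge-perpendicular basis functions. -/
def tensorSpanW (W : Submodule ℝ (ℝ → ℝ)) {n : ℕ} (lam : Fin (n + 1) → ℝ → ℝ) :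
    Submodule ℝ (ℝ → ℝ → ℝ) :=
  Submodule.span ℝ {f | ∃ w ∈ W, ∃ j, f = fun x s => w x * lam j s}

/-- Tangential (edge) continuity: the two patch components agree on the edge `s = 0`. -/
def TangCont (u : (ℝ → ℝ → ℝ) × (ℝ → ℝ → ℝ)) : Prop :=
  ∀ x ∈ Set.Icc (0:ℝ) 1, u.1 x 0 = u.2 x 0

/-- The moment `∫_{[0,1]²} f(x,s) q₁(x) q₂(s) dx ds`. -/
def mom2 (f : ℝ → ℝ → ℝ) (q₁ q₂ : ℝ → ℝ) : ℝ :=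
  ∫ x in (0:ℝ)..1, ∫ s in (0:ℝ)..1, f x s * q₁ x * q₂ s

lemma mem_tensorSpanW_of_span (W : Submodule ℝ (ℝ → ℝ)) {n : ℕ}
    (lam : Fin (n + 1) → ℝ → ℝ) {c : ℝ → ℝ} (hc : c ∈ W) {g : ℝ → ℝ}
    (hg : g ∈ Submodule.span ℝ (Set.range lam)) :
    (fun x s => c x * g s) ∈ tensorSpanW W lam := by
  induction hg using Submodule.span_induction with
  | mem f h =>
      obtain ⟨j, rfl⟩ := h
      exact Submodule.subset_span ⟨c, hc, j, rfl⟩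
  | zero =>
      have : (fun x s => c x * (0 : ℝ → ℝ) s) = (0 : ℝ → ℝ → ℝ) := by
        funext a b; simp
      rw [this]; exact (tensorSpanW W lam).zero_mem
  | add f₁ f₂ h₁ h₂ ih₁ ih₂ =>
      have : (fun x s => c x * (f₁ + f₂) s)
          = (fun x s => c x * f₁ s) + fun x s => c x * f₂ s := by
        funext a b; simp [mul_add]
      rw [this]; exact (tensorSpanW W lam).add_mem ih₁ ih₂
  | smul a f hf ih =>
      have : (fun x s => c x * (a • f) s) = a • fun x s => c x * f s := by
        funext u v; simp [Pi.smul_apply, smul_eq_mul]; ring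
      rw [this]; exact (tensorSpanW W lam).smul_mem a ih

lemma trace_mem (W : Submodule ℝ (ℝ → ℝ)) {n : ℕ} (lam : Fin (n + 1) → ℝ → ℝ)
    (h0 : ∀ j, lam j 0 = if j = 0 then 1 else 0) {f : ℝ → ℝ → ℝ}
    (hf : f ∈ tensorSpanW W lam) : (fun x => f x 0) ∈ W := by
  induction hf using Submodule.span_induction with
  | mem f h =>
      obtain ⟨w, hw, j, rfl⟩ := h
      by_cases hj : j = 0
      · subst hj
        have : (fun x => w x * lam 0 0) = w := by funext x; simp [h0]
        rw [this]; exact hw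
      · have : (fun x => w x * lam j 0) = (0 : ℝ → ℝ) := by funext x; simp [h0, hj]
        rw [this]; exact W.zero_mem
  | zero => exact W.zero_mem
  | add f₁ f₂ h₁ h₂ ih₁ ih₂ => exact W.add_mem ih₁ ih₂
  | smul a f hf ih => exact W.smul_mem a ih

lemma slice_contOn (W : Submodule ℝ (ℝ → ℝ)) {n : ℕ} (lam : Fin (n + 1) → ℝ → ℝ)
    (hc : ∀ j, ContinuousOn (lam j) (Set.Icc (0:ℝ) 1)) {f : ℝ → ℝ → ℝ}
    (hf : f ∈ tensorSpanW W lam) (x : ℝ) :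
    ContinuousOn (fun s => f x s) (Set.Icc (0:ℝ) 1) := by
  induction hf using Submodule.span_induction with
  | mem f h => obtain ⟨w, hw, j, rfl⟩ := h; exact continuousOn_const.mul (hc j)
  | zero => exact continuousOn_const
  | add f₁ f₂ h₁ h₂ ih₁ ih₂ => exact ih₁.add ih₂
  | smul a f hf ih => exact continuousOn_const.mul ih

lemma span_contOn {n : ℕ} (lam : Fin (n + 1) → ℝ → ℝ)
    (hc : ∀ j, ContinuousOn (lam j) (Set.Icc (0:ℝ) 1)) {g : ℝ → ℝ}
    (hg : g ∈ Submodule.span ℝ (Set.range lam)) :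
    ContinuousOn g (Set.Icc (0:ℝ) 1) := by
  induction hg using Submodule.span_induction with
  | mem f h => obtain ⟨j, rfl⟩ := h; exact hc j
  | zero => exact continuousOn_const
  | add f₁ f₂ h₁ h₂ ih₁ ih₂ => exact ih₁.add ih₂
  | smul a f hf ih => exact ih.const_smul a

/-- Proposition 4.1 of the paper, two-patch tangential edge setting:
there exists a local edge-conforming operator `P¹_e` on the broken tangential space
`V¹_pw` which maps into the tangentially continuous fields, fixes exactly the tangentially
continuous fields, and preserves the patchwise polynomial moments of order `r`. -/
theorem stmt7
    -- edge-parallel derived spline spaces W₋ ⊆ W₊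
    (Wm Wp : Submodule ℝ (ℝ → ℝ)) (hW : Wm ≤ Wp)
    [FiniteDimensional ℝ Wp]
    (hWc : ∀ f ∈ Wp, ContinuousOn f (Set.Icc (0:ℝ) 1))
    -- edge-perpendicular spaces 𝕍₋, 𝕍₊ with bases interpolatory at the edge s = 0
    (nm np : ℕ)
    (lamm : Fin (nm + 1) → ℝ → ℝ) (lamp : Fin (np + 1) → ℝ → ℝ)
    (hc_m : ∀ j, ContinuousOn (lamm j) (Set.Icc (0:ℝ) 1))
    (hc_p : ∀ j, ContinuousOn (lamp j) (Set.Icc (0:ℝ) 1))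
    (hli_m : LinearIndependent ℝ lamm) (hli_p : LinearIndependent ℝ lamp)
    (h0_m : ∀ j, lamm j 0 = if j = 0 then 1 else 0)
    (h0_p : ∀ j, lamp j 0 = if j = 0 then 1 else 0)
    -- the order r of moment preservation; Q ⊆ W₋
    (r : ℕ)
    (hQ : polyDegLT r ⊆ (Wm : Set (ℝ → ℝ)))
    -- corrector splines ν^σ vanishing at the edge with the moments of λ^σ₀
    (hnu_m : ∃ ν ∈ Submodule.span ℝ (Set.range lamm), ν 0 = 0 ∧
      ∀ q ∈ polyDegLT r, l2ip ν q = l2ip (lamm 0) q)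
    (hnu_p : ∃ ν ∈ Submodule.span ℝ (Set.range lamp), ν 0 = 0 ∧
      ∀ q ∈ polyDegLT r, l2ip ν q = l2ip (lamp 0) q)
    -- R¹ : W₊ → W₋ the L²-orthogonal projection onto W₋
    (R1 : ↥Wp →ₗ[ℝ] ↥Wm)
    (hR1orth : ∀ w : ↥Wp, ∀ v ∈ Wm, l2ip ((w : ℝ → ℝ) - (R1 w : ℝ → ℝ)) v = 0) :
    -- conclusion: the local edge-conforming projection P¹_e on V¹_pw
    ∃ P : ↥((tensorSpanW Wm lamm).prod (tensorSpanW Wp lamp)) →ₗ[ℝ]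
          ↥((tensorSpanW Wm lamm).prod (tensorSpanW Wp lamp)),
      (∀ u, TangCont ((P u : (ℝ → ℝ → ℝ) × (ℝ → ℝ → ℝ)))) ∧
      (∀ u, P u = u ↔ TangCont ((u : (ℝ → ℝ → ℝ) × (ℝ → ℝ → ℝ)))) ∧
      (∀ u, ∀ q₁ ∈ polyDegLT r, ∀ q₂ ∈ polyDegLT r,
        mom2 ((P u : (ℝ → ℝ → ℝ) × (ℝ → ℝ → ℝ)).1) q₁ q₂ =
          mom2 ((u : (ℝ → ℝ → ℝ) × (ℝ → ℝ → ℝ)).1) q₁ q₂ ∧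
        mom2 ((P u : (ℝ → ℝ → ℝ) × (ℝ → ℝ → ℝ)).2) q₁ q₂ =
          mom2 ((u : (ℝ → ℝ → ℝ) × (ℝ → ℝ → ℝ)).2) q₁ q₂) := by
  classical
  obtain ⟨ν, hν_mem, hν0, hνmom⟩ := hnu_p
  set g : ℝ → ℝ := lamp 0 - ν with hgdef
  have hg_mem : g ∈ Submodule.span ℝ (Set.range lamp) :=
    sub_mem (Submodule.subset_span ⟨0, rfl⟩) hν_mem
  have hνc : ContinuousOn ν (Set.Icc (0:ℝ) 1) := span_contOn lamp hc_p hν_mem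
  have hg_cont : ContinuousOn g (Set.Icc (0:ℝ) 1) := span_contOn lamp hc_p hg_mem
  have hg0 : g 0 = 1 := by
    rw [hgdef]; simp [Pi.sub_apply, h0_p 0, hν0]
  have hqc : ∀ q ∈ polyDegLT r, Continuous q := by
    rintro q ⟨p, -, rfl⟩; exact p.continuous
  have hint : ∀ f : ℝ → ℝ, ContinuousOn f (Set.Icc (0:ℝ) 1) →
      IntervalIntegrable f MeasureTheory.volume 0 1 := by
    intro f hf
    exact (by rwa [Set.uIcc_of_le (zero_le_one : (0:ℝ) ≤ 1)] :
      ContinuousOn f (Set.uIcc (0:ℝ) 1)).intervalIntegrable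
  have hgmom : ∀ q ∈ polyDegLT r, (∫ s in (0:ℝ)..1, g s * q s) = 0 := by
    intro q hq
    have h1 : IntervalIntegrable (fun s => lamp 0 s * q s) MeasureTheory.volume 0 1 :=
      hint _ ((hc_p 0).mul (hqc q hq).continuousOn)
    have h2 : IntervalIntegrable (fun s => ν s * q s) MeasureTheory.volume 0 1 :=
      hint _ (hνc.mul (hqc q hq).continuousOn)
    have hsplit : (fun s => g s * q s)
        = fun s => lamp 0 s * q s - ν s * q s := by
      funext s; rw [hgdef]; simp [Pi.sub_apply]; ring
    rw [hsplit, intervalIntegral.integral_sub h1 h2]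
    show l2ip (lamp 0) q - l2ip ν q = 0
    rw [hνmom q hq, sub_self]
  -- the subspace of Wp of functions vanishing on [0,1], and a complement projection
  let res : ↥Wp →ₗ[ℝ] (Set.Icc (0:ℝ) 1 → ℝ) :=
    { toFun := fun w t => (w : ℝ → ℝ) t
      map_add' := fun a b => rfl
      map_smul' := fun c a => rfl }
    
  obtain ⟨N', hNc⟩ := Submodule.exists_isCompl (LinearMap.ker res)
  let π : ↥Wp →ₗ[ℝ] ↥Wp :=
    N'.subtype ∘ₗ (N'.projectionOnto (LinearMap.ker res) hNc.symm)
  have hπ0 : ∀ w ∈ LinearMap.ker res, π w = 0 := by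
    intro w hw
    show N'.subtype (N'.projectionOnto (LinearMap.ker res) hNc.symm w) = 0
    rw [Submodule.linearProjOfIsCompl_apply_right' hNc.symm hw, map_zero]
  have hπN : ∀ w : ↥Wp, w - π w ∈ LinearMap.ker res := by
    intro w
    have hdec := Submodule.projection_add_projection_eq_self hNc w
    have hπdef : π w = ↑(N'.projectionOnto (LinearMap.ker res) hNc.symm w) := rfl
    have : w - π w = ↑((LinearMap.ker res).projectionOnto N' hNc w) := by
      rw [hπdef]; exact sub_eq_of_eq_add hdec.symm
    rw [this]
    exact SetLike.coe_mem _
  have hπIcc : ∀ (w : ↥Wp), ∀ x ∈ Set.Icc (0:ℝ) 1,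
      ((π w : ℝ → ℝ)) x = (w : ℝ → ℝ) x := by
    intro w x hx
    have h1 : res (w - π w) = 0 := LinearMap.mem_ker.mp (hπN w)
    have h2 := congrFun h1 ⟨x, hx⟩
    have h3 : ((w - π w : ↥Wp) : ℝ → ℝ) x = 0 := h2
    rw [Submodule.coe_sub, Pi.sub_apply] at h3
    linarith
  -- membership helpers
  have hmem1 : ∀ u : ↥((tensorSpanW Wm lamm).prod (tensorSpanW Wp lamp)),
      (↑u : (ℝ → ℝ → ℝ) × (ℝ → ℝ → ℝ)).1 ∈ tensorSpanW Wm lamm := fun u => (Submodule.mem_prod.mp u.2).1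
  have hmem2 : ∀ u : ↥((tensorSpanW Wm lamm).prod (tensorSpanW Wp lamp)),
      (↑u : (ℝ → ℝ → ℝ) × (ℝ → ℝ → ℝ)).2 ∈ tensorSpanW Wp lamp := fun u => (Submodule.mem_prod.mp u.2).2
  -- jump map
  let jmap : ↥((tensorSpanW Wm lamm).prod (tensorSpanW Wp lamp)) →ₗ[ℝ] ↥Wp :=
    { toFun := fun u => ⟨fun x => (↑u : (ℝ → ℝ → ℝ) × (ℝ → ℝ → ℝ)).1 x 0 - (↑u : (ℝ → ℝ → ℝ) × (ℝ → ℝ → ℝ)).2 x 0,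
        Wp.sub_mem (hW (trace_mem Wm lamm h0_m (hmem1 u)))
          (trace_mem Wp lamp h0_p (hmem2 u))⟩
      map_add' := by
        intro a b
        apply Subtype.ext; funext x
        simp only [Submodule.coe_add, Prod.fst_add, Prod.snd_add, Pi.add_apply]
        ring
      map_smul' := by
        intro c a
        apply Subtype.ext; funext x
        simp only [Submodule.coe_smul, Prod.smul_fst, Prod.smul_snd, Pi.smul_apply,
          smul_eq_mul, RingHom.id_apply]
        ring }
  let cmap := π ∘ₗ jmap
  have hcmap : ∀ u, cmap u = π (jmap u) := fun u => rfl
  have hjmap : ∀ u (x : ℝ), ((jmap u : ℝ → ℝ)) x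
      = (↑u : (ℝ → ℝ → ℝ) × (ℝ → ℝ → ℝ)).1 x 0 - (↑u : (ℝ → ℝ → ℝ) × (ℝ → ℝ → ℝ)).2 x 0 := fun u x => rfl
  -- the correction operator
  let Emap : ↥((tensorSpanW Wm lamm).prod (tensorSpanW Wp lamp)) →ₗ[ℝ]
      ↥((tensorSpanW Wm lamm).prod (tensorSpanW Wp lamp)) :=
    { toFun := fun u => ⟨((0 : ℝ → ℝ → ℝ), fun x s => ((cmap u : ℝ → ℝ)) x * g s),
        Submodule.mem_prod.mpr ⟨Submodule.zero_mem _,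
          mem_tensorSpanW_of_span Wp lamp (cmap u).2 hg_mem⟩⟩
      map_add' := by
        intro a b
        apply Subtype.ext
        apply Prod.ext
        · simp
        · funext x s
          simp only [Submodule.coe_add, Prod.snd_add, Pi.add_apply, map_add]
          ring
      map_smul' := by
        intro c a
        apply Subtype.ext
        apply Prod.ext
        · simp
        · funext x s
          simp only [Submodule.coe_smul, Prod.smul_snd, Pi.smul_apply, smul_eq_mul,
            RingHom.id_apply, map_smul]
          ring }
  have hEmap1 : ∀ u, (↑(Emap u) : (ℝ → ℝ → ℝ) × (ℝ → ℝ → ℝ)).1 = (0 : ℝ → ℝ → ℝ) := fun u => rfl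
  have hEmap2 : ∀ u (x s : ℝ), (↑(Emap u) : (ℝ → ℝ → ℝ) × (ℝ → ℝ → ℝ)).2 x s
      = ((cmap u : ℝ → ℝ)) x * g s := fun u x s => rfl
  set Pmap := LinearMap.id + Emap with hPdef
  have hP : ∀ u, Pmap u = u + Emap u := fun u => rfl
  have hPu1 : ∀ u, (↑(Pmap u) : (ℝ → ℝ → ℝ) × (ℝ → ℝ → ℝ)).1 = (↑u : (ℝ → ℝ → ℝ) × (ℝ → ℝ → ℝ)).1 := by
    intro u
    rw [hP u, Submodule.coe_add, Prod.fst_add, hEmap1, add_zero]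
  have hPu2 : ∀ u (x s : ℝ), (↑(Pmap u) : (ℝ → ℝ → ℝ) × (ℝ → ℝ → ℝ)).2 x s
      = (↑u : (ℝ → ℝ → ℝ) × (ℝ → ℝ → ℝ)).2 x s + ((cmap u : ℝ → ℝ)) x * g s := by
    intro u x s
    rw [hP u, Submodule.coe_add, Prod.snd_add, Pi.add_apply, Pi.add_apply, hEmap2]
  -- (1) conformity
  have hconf : ∀ u, TangCont (↑(Pmap u) : (ℝ → ℝ → ℝ) × (ℝ → ℝ → ℝ)) := by
    intro u x hx
    rw [hPu1 u, hPu2 u x 0, hg0, mul_one, hcmap, hπIcc (jmap u) x hx, hjmap]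
    ring
  -- (2) fixed points
  have hfix : ∀ u : ↥((tensorSpanW Wm lamm).prod (tensorSpanW Wp lamp)), TangCont (↑u : (ℝ → ℝ → ℝ) × (ℝ → ℝ → ℝ)) → Emap u = 0 := by
    intro u h
    have hj : jmap u ∈ LinearMap.ker res := by
      apply LinearMap.mem_ker.mpr
      funext t
      show (↑u : (ℝ → ℝ → ℝ) × (ℝ → ℝ → ℝ)).1 (↑t) 0 - (↑u : (ℝ → ℝ → ℝ) × (ℝ → ℝ → ℝ)).2 (↑t) 0 = 0
      rw [h (↑t) t.2, sub_self]
    have hc0 : cmap u = 0 := by rw [hcmap]; exact hπ0 _ hj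
    apply Subtype.ext
    apply Prod.ext
    · rw [hEmap1]; simp
    · funext x s
      rw [hEmap2, hc0]
      simp
  have hiff : ∀ u, Pmap u = u ↔ TangCont (↑u : (ℝ → ℝ → ℝ) × (ℝ → ℝ → ℝ)) := by
    intro u
    constructor
    · intro h
      have h2 := hconf u
      rwa [h] at h2
    · intro h
      rw [hP u, hfix u h, add_zero]
  -- (3) moments
  have hmom : ∀ u, ∀ q₁ ∈ polyDegLT r, ∀ q₂ ∈ polyDegLT r,
      mom2 ((↑(Pmap u) : (ℝ → ℝ → ℝ) × (ℝ → ℝ → ℝ)).1) q₁ q₂ = mom2 ((↑u : (ℝ → ℝ → ℝ) × (ℝ → ℝ → ℝ)).1) q₁ q₂ ∧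
      mom2 ((↑(Pmap u) : (ℝ → ℝ → ℝ) × (ℝ → ℝ → ℝ)).2) q₁ q₂ = mom2 ((↑u : (ℝ → ℝ → ℝ) × (ℝ → ℝ → ℝ)).2) q₁ q₂ := by
    intro u q₁ hq₁ q₂ hq₂
    constructor
    · rw [hPu1 u]
    · have key : ∀ x : ℝ,
          (∫ s in (0:ℝ)..1, (↑(Pmap u) : (ℝ → ℝ → ℝ) × (ℝ → ℝ → ℝ)).2 x s * q₁ x * q₂ s)
            = ∫ s in (0:ℝ)..1, (↑u : (ℝ → ℝ → ℝ) × (ℝ → ℝ → ℝ)).2 x s * q₁ x * q₂ s := by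
        intro x
        have hu2int : IntervalIntegrable
            (fun s => (↑u : (ℝ → ℝ → ℝ) × (ℝ → ℝ → ℝ)).2 x s * q₁ x * q₂ s) MeasureTheory.volume 0 1 :=
          hint _ (((slice_contOn Wp lamp hc_p (hmem2 u) x).mul
            continuousOn_const).mul (hqc q₂ hq₂).continuousOn)
        have hcg : IntervalIntegrable
            (fun s => (((cmap u : ℝ → ℝ)) x * q₁ x) * (g s * q₂ s))
            MeasureTheory.volume 0 1 :=
          hint _ (continuousOn_const.mul (hg_cont.mul (hqc q₂ hq₂).continuousOn))
        have hsplit : (fun s => (↑(Pmap u) : (ℝ → ℝ → ℝ) × (ℝ → ℝ → ℝ)).2 x s * q₁ x * q₂ s)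
            = fun s => (↑u : (ℝ → ℝ → ℝ) × (ℝ → ℝ → ℝ)).2 x s * q₁ x * q₂ s
              + (((cmap u : ℝ → ℝ)) x * q₁ x) * (g s * q₂ s) := by
          funext s
          rw [hPu2 u x s]; ring
        rw [hsplit, intervalIntegral.integral_add hu2int hcg,
          intervalIntegral.integral_const_mul, hgmom q₂ hq₂, mul_zero, add_zero]
      simp only [mom2]
      congr 1
      funext x
      exact key x
  exact ⟨Pmap, hconf, hiff, hmom⟩


end
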